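/- Suppose β=0 (no aging) and no healthcare, with parameters δ>0, ψ>1, γ>1/ψ, γ≠1, ζ∈(0,1], r,μ,σ with σ>0, and fix m≥0 with c̃₀(m) := ψδ + (1-ψ)((ζ^{1-γ}-1)m/(1-γ) + r + μ²/(2γσ²)) > 0. Then the function w(x) := δ^θ·x^{1-γ}/(1-γ)·c̃₀(m)^{-θ/ψ}, θ=(1-γ)/(1-1/ψ), solves the stationary HJB equation: sup_{c≥0}{f(c,w(x)) - c·w'(x)} + sup_{π∈ℝ}{μπx·w'(x) + σ²π²x²w''(x)/2} + rx·w'(x) + (ζ^{1-γ}-1)m·w(x) = 0 for all x>0, with maximizers c̄(x) = x·c̃₀(m) and π̄ = μ/(γσ²). -/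

import Mathlib

set_option maxHeartbeats 1000000

open Real

/-- Tangent-line inequality for the concave function `a ↦ a^p`, `0 ≤ p ≤ 1`. -/
lemma tangent_rpow_aux {a b p : ℝ} (ha : 0 ≤ a) (hb : 0 < b) (hp0 : 0 ≤ p) (hp1 : p ≤ 1) :
    a ^ p ≤ b ^ p + p * (b ^ (p - 1) * (a - b)) := by
  have hs : -1 ≤ a / b - 1 := by
    have : 0 ≤ a / b := div_nonneg ha hb.le
    linarith
  have h1 : (1 + (a / b - 1)) ^ p ≤ 1 + p * (a / b - 1) :=
    rpow_one_add_le_one_add_mul_self hs hp0 hp1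
  rw [show 1 + (a / b - 1) = a / b by ring] at h1
  rw [Real.div_rpow ha hb.le, div_le_iff₀ (Real.rpow_pos_of_pos hb p)] at h1
  have h3 : b ^ (p - 1) = b ^ p / b := by rw [Real.rpow_sub hb, Real.rpow_one]
  rw [h3]
  calc a ^ p ≤ (1 + p * (a / b - 1)) * b ^ p := h1
    _ = b ^ p + p * (b ^ p / b * (a - b)) := by field_simp

/-- The explicit function `w(x) = δ^θ x^{1-γ}/(1-γ) c̃₀(m)^{-θ/ψ}` solves the stationary HJB
equation in the case of constant mortality `m` and no healthcare, with maximizers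
`c̄(x) = x·c̃₀(m)` and `π̄ = μ/(γσ²)`. -/
theorem hjb_no_aging_no_healthcare
    (δ ψ γ ζ r μ σ m θ : ℝ)
    (hδ : 0 < δ) (hψ : 1 < ψ) (hγψ : 1 / ψ < γ) (hγ0 : 0 < γ) (hγ : γ ≠ 1)
    (hζ : ζ ∈ Set.Ioc (0 : ℝ) 1) (hσ : 0 < σ) (hm : 0 ≤ m)
    (hθ : θ = (1 - γ) / (1 - 1 / ψ))
    (c₀ : ℝ)
    (hc₀ : c₀ = ψ * δ + (1 - ψ) * ((ζ ^ (1 - γ) - 1) * m / (1 - γ) + r + μ ^ 2 / (2 * γ * σ ^ 2)))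
    (hc₀pos : 0 < c₀)
    (f : ℝ → ℝ → ℝ)
    (hf : ∀ c v, f c v = δ * c ^ (1 - 1 / ψ) / (1 - 1 / ψ) * ((1 - γ) * v) ^ (1 - 1 / θ)
        - δ * θ * v)
    (w : ℝ → ℝ)
    (hw : ∀ x, w x = δ ^ θ * x ^ (1 - γ) / (1 - γ) * c₀ ^ (-(θ / ψ))) :
    ∀ x : ℝ, 0 < x →
      IsGreatest {y : ℝ | ∃ c : ℝ, 0 ≤ c ∧ y = f c (w x) - c * deriv w x}
        (f (x * c₀) (w x) - (x * c₀) * deriv w x) ∧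
      IsGreatest {y : ℝ | ∃ p : ℝ,
          y = μ * p * x * deriv w x + σ ^ 2 * p ^ 2 * x ^ 2 * deriv (deriv w) x / 2}
        (μ * (μ / (γ * σ ^ 2)) * x * deriv w x
          + σ ^ 2 * (μ / (γ * σ ^ 2)) ^ 2 * x ^ 2 * deriv (deriv w) x / 2) ∧
      (f (x * c₀) (w x) - (x * c₀) * deriv w x)
        + (μ * (μ / (γ * σ ^ 2)) * x * deriv w x
            + σ ^ 2 * (μ / (γ * σ ^ 2)) ^ 2 * x ^ 2 * deriv (deriv w) x / 2)
        + r * x * deriv w x + (ζ ^ (1 - γ) - 1) * m * w x = 0 := by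
  have hψ0 : (0:ℝ) < ψ := lt_trans one_pos hψ
  set ρ : ℝ := 1 - 1 / ψ with hρdef
  clear_value ρ
  have hρ0 : 0 < ρ := by
    rw [hρdef]
    have : 1 / ψ < 1 := by
      rw [div_lt_one hψ0]; exact hψ
    linarith
  have hρ1 : ρ < 1 := by
    rw [hρdef]
    have : 0 < 1 / ψ := by positivity
    linarith
  have h1γ : (1:ℝ) - γ ≠ 0 := sub_ne_zero.mpr (Ne.symm hγ)
  have hθ0 : θ ≠ 0 := by rw [hθ]; exact div_ne_zero h1γ hρ0.ne'
  have hθρ : θ * ρ = 1 - γ := by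
    rw [hθ, div_mul_cancel₀ _ hρ0.ne']
  set B : ℝ := δ ^ θ * c₀ ^ (-(θ / ψ)) with hBdef
  clear_value B
  have hB : 0 < B := by
    rw [hBdef]
    have h1 : 0 < δ ^ θ := Real.rpow_pos_of_pos hδ θ
    have h2 : 0 < c₀ ^ (-(θ / ψ)) := Real.rpow_pos_of_pos hc₀pos _
    exact mul_pos h1 h2
  have hwfun : w = fun y : ℝ => (B / (1 - γ)) * y ^ (1 - γ) := by
    funext y; rw [hw, hBdef]; ring
  have hw1 : ∀ y : ℝ, y ≠ 0 → HasDerivAt w (B * y ^ (-γ)) y := by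
    intro y hy
    have h := (Real.hasDerivAt_rpow_const (x := y) (p := 1 - γ) (Or.inl hy)).const_mul
      (B / (1 - γ))
    rw [hwfun]
    have hexp : (1:ℝ) - γ - 1 = -γ := by ring
    rw [hexp] at h
    convert h using 1
    · rfl
    · rfl
    · rw [← mul_assoc, div_mul_cancel₀ _ h1γ]
  have hdw : ∀ y : ℝ, y ≠ 0 → deriv w y = B * y ^ (-γ) := fun y hy => (hw1 y hy).deriv
  intro x hx
  have d1 : deriv w x = B * x ^ (-γ) := hdw x hx.ne'
  have d2 : deriv (deriv w) x = B * (-γ) * x ^ (-γ - 1) := by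
    have hev : deriv w =ᶠ[nhds x] fun y => B * y ^ (-γ) := by
      filter_upwards [eventually_ne_nhds hx.ne'] with y hy using hdw y hy
    rw [hev.deriv_eq]
    have h := (Real.hasDerivAt_rpow_const (x := x) (p := -γ) (Or.inl hx.ne')).const_mul B
    rw [h.deriv]
    ring
  have hx1γ : 0 < x ^ ((1:ℝ) - γ) := Real.rpow_pos_of_pos hx _
  set S : ℝ := B * x ^ ((1:ℝ) - γ) with hSdef
  clear_value S
  have hS : 0 < S := by rw [hSdef]; exact mul_pos hB hx1γ
  have hwx : w x = S / (1 - γ) := by rw [hw, hSdef, hBdef]; ring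
  have hW : (1 - γ) * w x = S := by rw [hwx]; field_simp
  -- splitting powers of x
  have hxsplit1 : x * x ^ (-γ) = x ^ ((1:ℝ) - γ) := by
    have h := Real.rpow_add hx 1 (-γ)
    rw [Real.rpow_one] at h
    rw [← h]
    congr 1
  have hxsplit2 : x ^ 2 * x ^ (-γ - 1) = x ^ ((1:ℝ) - γ) := by
    have h2 : (x:ℝ) ^ (2:ℕ) = x ^ ((2:ℕ):ℝ) := (Real.rpow_natCast x 2).symm
    rw [h2, ← Real.rpow_add hx]
    congr 1
    push_cast
    ring
  -- the key first-order condition identity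
  have e1 : (x ^ ((1:ℝ) - γ)) ^ (1 - 1 / θ) = x ^ ((1 - γ) - ρ) := by
    rw [← Real.rpow_mul hx.le]
    congr 1
    have hθinv : 1 / θ = ρ / (1 - γ) := by rw [hθ, one_div_div]
    rw [hθinv, mul_sub, mul_one, mul_div_cancel₀ _ h1γ]
  have e2 : B ^ (1 - 1 / θ) = δ ^ (θ - 1) * c₀ ^ (-((θ - 1) / ψ)) := by
    rw [hBdef, Real.mul_rpow (Real.rpow_pos_of_pos hδ θ).le
      (Real.rpow_pos_of_pos hc₀pos _).le, ← Real.rpow_mul hδ.le, ← Real.rpow_mul hc₀pos.le]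
    congr 2
    · field_simp
    · field_simp
  have hxc₀ : 0 < x * c₀ := mul_pos hx hc₀pos
  have key : δ * (x * c₀) ^ (ρ - 1) * S ^ (1 - 1 / θ) = B * x ^ (-γ) := by
    rw [hSdef, Real.mul_rpow hB.le hx1γ.le, e1, e2,
      Real.mul_rpow hx.le hc₀pos.le]
    have hδθ : δ * δ ^ (θ - 1) = δ ^ θ := by
      have h := Real.rpow_add hδ 1 (θ - 1)
      rw [Real.rpow_one] at h
      rw [← h]
      congr 1
      ring
    have hx' : x ^ (ρ - 1) * x ^ ((1 - γ) - ρ) = x ^ (-γ) := by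
      rw [← Real.rpow_add hx]; congr 1; ring
    have hc' : c₀ ^ (ρ - 1) * c₀ ^ (-((θ - 1) / ψ)) = c₀ ^ (-(θ / ψ)) := by
      rw [← Real.rpow_add hc₀pos]
      congr 1
      rw [hρdef]
      field_simp
      ring
    calc δ * (x ^ (ρ - 1) * c₀ ^ (ρ - 1)) * (δ ^ (θ - 1) * c₀ ^ (-((θ - 1) / ψ)) *
          x ^ ((1 - γ) - ρ))
        = (δ * δ ^ (θ - 1)) * (x ^ (ρ - 1) * x ^ ((1 - γ) - ρ)) *
          (c₀ ^ (ρ - 1) * c₀ ^ (-((θ - 1) / ψ))) := by ring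
      _ = δ ^ θ * x ^ (-γ) * c₀ ^ (-(θ / ψ)) := by rw [hδθ, hx', hc']
      _ = B * x ^ (-γ) := by rw [hBdef]; ring
  have hM : 0 < S ^ (1 - 1 / θ) := Real.rpow_pos_of_pos hS _
  have hPsplit : (x * c₀) ^ ρ = (x * c₀) * (x * c₀) ^ (ρ - 1) := by
    have h := Real.rpow_add hxc₀ 1 (ρ - 1)
    rw [Real.rpow_one] at h
    rw [← h]
    congr 1
    ring
  refine ⟨⟨⟨x * c₀, hxc₀.le, rfl⟩, ?_⟩, ⟨⟨μ / (γ * σ ^ 2), rfl⟩, ?_⟩, ?_⟩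
  · -- upper bound for consumption
    rintro y ⟨c, hc, rfl⟩
    rw [hf, hf, d1, hW]
    have htan : c ^ ρ ≤ (x * c₀) ^ ρ + ρ * ((x * c₀) ^ (ρ - 1) * (c - x * c₀)) :=
      tangent_rpow_aux hc hxc₀ hρ0.le hρ1.le
    have h4 := mul_le_mul_of_nonneg_left htan
      (show (0:ℝ) ≤ δ / ρ * S ^ (1 - 1 / θ) by positivity)
    have h3 : δ * c ^ ρ / ρ * S ^ (1 - 1 / θ)
        ≤ δ * (x * c₀) ^ ρ / ρ * S ^ (1 - 1 / θ) + (c - x * c₀) * (B * x ^ (-γ)) := by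
      calc δ * c ^ ρ / ρ * S ^ (1 - 1 / θ) = δ / ρ * S ^ (1 - 1 / θ) * c ^ ρ := by ring
        _ ≤ δ / ρ * S ^ (1 - 1 / θ) *
            ((x * c₀) ^ ρ + ρ * ((x * c₀) ^ (ρ - 1) * (c - x * c₀))) := h4
        _ = δ * (x * c₀) ^ ρ / ρ * S ^ (1 - 1 / θ)
            + (δ * (x * c₀) ^ (ρ - 1) * S ^ (1 - 1 / θ)) * (c - x * c₀) := by
            field_simp [hρ0.ne']
        _ = δ * (x * c₀) ^ ρ / ρ * S ^ (1 - 1 / θ) + (c - x * c₀) * (B * x ^ (-γ)) := by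
            rw [key]; ring
    linarith
  · -- upper bound for portfolio
    rintro y ⟨p, rfl⟩
    rw [d1, d2]
    have hxγ1 : 0 < x ^ (-γ - 1) := Real.rpow_pos_of_pos hx _
    have hq : μ * p - γ * σ ^ 2 * p ^ 2 / 2
        ≤ μ * (μ / (γ * σ ^ 2)) - γ * σ ^ 2 * (μ / (γ * σ ^ 2)) ^ 2 / 2 := by
      have hgs : (0:ℝ) < γ * σ ^ 2 := by positivity
      have hkey2 : μ * (μ / (γ * σ ^ 2)) - γ * σ ^ 2 * (μ / (γ * σ ^ 2)) ^ 2 / 2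
          = μ ^ 2 / (2 * (γ * σ ^ 2)) := by
        field_simp
        ring
      rw [hkey2, le_div_iff₀ (by positivity : (0:ℝ) < 2 * (γ * σ ^ 2))]
      nlinarith [sq_nonneg (γ * σ ^ 2 * p - μ)]
    have hK : (0:ℝ) ≤ x ^ 2 * (B * x ^ (-γ - 1)) := by positivity
    have h2 := mul_le_mul_of_nonneg_left hq hK
    calc μ * p * x * (B * x ^ (-γ))
          + σ ^ 2 * p ^ 2 * x ^ 2 * (B * (-γ) * x ^ (-γ - 1)) / 2
        = x ^ 2 * (B * x ^ (-γ - 1)) * (μ * p - γ * σ ^ 2 * p ^ 2 / 2)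
          + μ * p * (B * (x * x ^ (-γ) - x ^ 2 * x ^ (-γ - 1))) := by ring
      _ = x ^ 2 * (B * x ^ (-γ - 1)) * (μ * p - γ * σ ^ 2 * p ^ 2 / 2) := by
          rw [hxsplit1, hxsplit2]; ring
      _ ≤ x ^ 2 * (B * x ^ (-γ - 1)) *
          (μ * (μ / (γ * σ ^ 2)) - γ * σ ^ 2 * (μ / (γ * σ ^ 2)) ^ 2 / 2) := h2
      _ = μ * (μ / (γ * σ ^ 2)) * x * (B * x ^ (-γ))
          + σ ^ 2 * (μ / (γ * σ ^ 2)) ^ 2 * x ^ 2 * (B * (-γ) * x ^ (-γ - 1)) / 2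
          - μ * (μ / (γ * σ ^ 2)) * (B * (x * x ^ (-γ) - x ^ 2 * x ^ (-γ - 1))) := by ring
      _ = μ * (μ / (γ * σ ^ 2)) * x * (B * x ^ (-γ))
          + σ ^ 2 * (μ / (γ * σ ^ 2)) ^ 2 * x ^ 2 * (B * (-γ) * x ^ (-γ - 1)) / 2 := by
          rw [hxsplit1, hxsplit2]; ring
  · -- HJB equation
    have hfval : f (x * c₀) (w x) = c₀ * S / ρ - δ * S / ρ := by
      rw [hf, hW]
      have R1 : δ * (x * c₀) ^ ρ * S ^ (1 - 1 / θ) = c₀ * S := by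
        rw [hPsplit]
        have h5 : δ * (x * c₀ * (x * c₀) ^ (ρ - 1)) * S ^ (1 - 1 / θ)
            = (x * c₀) * (δ * (x * c₀) ^ (ρ - 1) * S ^ (1 - 1 / θ)) := by ring
        rw [h5, key, hSdef]
        calc x * c₀ * (B * x ^ (-γ)) = c₀ * (B * (x * x ^ (-γ))) := by ring
          _ = c₀ * (B * x ^ ((1:ℝ) - γ)) := by rw [hxsplit1]
      have hδθw : δ * θ * w x = δ * S / ρ := by
        have hθinv : θ / (1 - γ) = 1 / ρ := by
          rw [hθ, div_right_comm, div_self h1γ]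
        calc δ * θ * w x = δ * S * (θ / (1 - γ)) := by rw [hwx]; ring
          _ = δ * S * (1 / ρ) := by rw [hθinv]
          _ = δ * S / ρ := by ring
      linear_combination (1 / ρ) * R1 - hδθw
    -- individual product values
    have A1 : (x * c₀) * deriv w x = c₀ * S := by
      rw [d1, hSdef]
      linear_combination (c₀ * B) * hxsplit1
    have A2 : μ * (μ / (γ * σ ^ 2)) * x * deriv w x = μ * (μ / (γ * σ ^ 2)) * S := by
      rw [d1, hSdef]
      linear_combination (μ * (μ / (γ * σ ^ 2)) * B) * hxsplit1
    have A3 : r * x * deriv w x = r * S := by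
      rw [d1, hSdef]
      linear_combination (r * B) * hxsplit1
    have A4 : σ ^ 2 * (μ / (γ * σ ^ 2)) ^ 2 * x ^ 2 * deriv (deriv w) x / 2
        = σ ^ 2 * (μ / (γ * σ ^ 2)) ^ 2 * (-γ * S) / 2 := by
      rw [d2, hSdef]
      linear_combination (σ ^ 2 * (μ / (γ * σ ^ 2)) ^ 2 * (-γ) * B / 2) * hxsplit2
    have A5 : μ * (μ / (γ * σ ^ 2)) * S + σ ^ 2 * (μ / (γ * σ ^ 2)) ^ 2 * (-γ * S) / 2
        = μ ^ 2 / (2 * γ * σ ^ 2) * S := by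
      field_simp
      ring
    have hsum : (c₀ - δ) / ρ - c₀ + μ ^ 2 / (2 * γ * σ ^ 2) + r
        + (ζ ^ (1 - γ) - 1) * m / (1 - γ) = 0 := by
      have hρψ : ρ * ψ = ψ - 1 := by rw [hρdef]; field_simp
      have h1 : c₀ - δ = ρ * (ψ * (δ - ((ζ ^ (1 - γ) - 1) * m / (1 - γ) + r
          + μ ^ 2 / (2 * γ * σ ^ 2)))) := by
        rw [hc₀, ← mul_assoc, hρψ]; ring
      have h2 : (c₀ - δ) / ρ = ψ * (δ - ((ζ ^ (1 - γ) - 1) * m / (1 - γ) + r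
          + μ ^ 2 / (2 * γ * σ ^ 2))) := by
        rw [h1, mul_div_cancel_left₀ _ hρ0.ne']
      rw [h2, hc₀]
      ring
    rw [hfval, A1, A2, A3, A4, hwx]
    linear_combination S * hsum + A5
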